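/- Let s ∈ K²\{0} and let ξ ∈ M_{2×4}(K) have rank 2, and set φ = σ₁(s,ξ) ∈ Z₁ \ Z₂. Then the subspace 𝒢_φ = {ψ ∈ M₄(K) : (φw)₃(ψw)₀ − (φw)₂(ψw)₁ − (φw)₁(ψw)₂ + (φw)₀(ψw)₃ = 0 for all w ∈ K⁴} equals the tangent space {σ₁(s,t) + σ₁(s',ξ) : t ∈ M_{2×4}(K), s' ∈ K²} to Z₁ at φ; in particular it has dimension 9 over K. (The analogous statement holds for σ₂ and Z₂.) Consequently the base scheme of the rational map induced by Q is reduced away from Z₁ ∩ Z₂. -/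

import Mathlib

open Matrix

variable {K : Type*} [Field K]

/-- The Segre embedding `σ₁`: rows `(s₀t⁰, s₀t¹, s₁t⁰, s₁t¹)`. -/
def segre1 (s : Fin 2 → K) (t : Matrix (Fin 2) (Fin 4) K) :
    Matrix (Fin 4) (Fin 4) K :=
  Matrix.of fun i j => s (![0, 0, 1, 1] i) * t (![0, 1, 0, 1] i) j

/-- The Segre embedding `σ₂`: rows `(s₀t⁰, s₁t⁰, s₀t¹, s₁t¹)`. -/
def segre2 (s : Fin 2 → K) (t : Matrix (Fin 2) (Fin 4) K) :
    Matrix (Fin 4) (Fin 4) K :=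
  Matrix.of fun i j => s (![0, 1, 0, 1] i) * t (![0, 0, 1, 1] i) j

/-- The intersection `𝒢_φ` of the tangent spaces at `φ` to all point conditions of
the quadric `Q = V(x₀x₃ - x₁x₂)`. -/
def Gfiber (φ : Matrix (Fin 4) (Fin 4) K) : Set (Matrix (Fin 4) (Fin 4) K) :=
  {ψ | ∀ w : Fin 4 → K,
    φ.mulVec w 3 * ψ.mulVec w 0 - φ.mulVec w 2 * ψ.mulVec w 1
      - φ.mulVec w 1 * ψ.mulVec w 2 + φ.mulVec w 0 * ψ.mulVec w 3 = 0}

lemma surj_of_rank2 (ξ : Matrix (Fin 2) (Fin 4) K) (hξ : ξ.rank = 2) :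
    Function.Surjective ξ.mulVec := by
  have h : LinearMap.range ξ.mulVecLin = ⊤ := by
    apply Submodule.eq_top_of_finrank_eq
    rw [← Matrix.rank, hξ, Module.finrank_fin_fun]
  intro v
  obtain ⟨w, hw⟩ := LinearMap.range_eq_top.1 h v
  exact ⟨w, by simpa using hw⟩

lemma fwd1 (s s' : Fin 2 → K) (ξ t : Matrix (Fin 2) (Fin 4) K) :
    segre1 s t + segre1 s' ξ ∈ Gfiber (segre1 s ξ) := by
  intro w
  simp [segre1, Matrix.mulVec, dotProduct, Fin.sum_univ_four, Matrix.add_apply]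
  ring

lemma fwd2 (s s' : Fin 2 → K) (ξ t : Matrix (Fin 2) (Fin 4) K) :
    segre2 s t + segre2 s' ξ ∈ Gfiber (segre2 s ξ) := by
  intro w
  simp [segre2, Matrix.mulVec, dotProduct, Fin.sum_univ_four, Matrix.add_apply]
  ring

lemma rev1 (s : Fin 2 → K) (ξ : Matrix (Fin 2) (Fin 4) K) (hs : s ≠ 0)
    (hsurj : Function.Surjective ξ.mulVec) (ψ : Matrix (Fin 4) (Fin 4) K)
    (hψ : ψ ∈ Gfiber (segre1 s ξ)) :
    ∃ (t : Matrix (Fin 2) (Fin 4) K) (s' : Fin 2 → K),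
      ψ = segre1 s t + segre1 s' ξ := by
  obtain ⟨w₁, hw₁⟩ := hsurj ![1, 0]
  obtain ⟨w₂, hw₂⟩ := hsurj ![0, 1]
  set a : Fin 4 → K := fun k => s 1 * ψ 0 k - s 0 * ψ 2 k with ha_def
  set b : Fin 4 → K := fun k => s 0 * ψ 3 k - s 1 * ψ 1 k with hb_def
  have hQ : ∀ w, (ξ.mulVec w 0) * (b ⬝ᵥ w) + (ξ.mulVec w 1) * (a ⬝ᵥ w) = 0 := by
    intro w
    have h := hψ w
    simp only [ha_def, hb_def, segre1, Matrix.mulVec, dotProduct,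
      Fin.sum_univ_four, Matrix.of_apply, Matrix.cons_val_zero, Matrix.cons_val_one,
      Matrix.head_cons, Matrix.cons_val_two, Matrix.tail_cons, Matrix.cons_val_three] at h ⊢
    linear_combination h
  have hpol : ∀ w w', ξ.mulVec w 0 * (b ⬝ᵥ w') + ξ.mulVec w' 0 * (b ⬝ᵥ w)
      + ξ.mulVec w 1 * (a ⬝ᵥ w') + ξ.mulVec w' 1 * (a ⬝ᵥ w) = 0 := by
    intro w w'
    have h1 := hQ (w + w'); have h2 := hQ w; have h3 := hQ w'
    simp only [Matrix.mulVec, dotProduct, Fin.sum_univ_four, Pi.add_apply] at h1 h2 h3 ⊢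
    linear_combination h1 - h2 - h3
  have hbw₁ : b ⬝ᵥ w₁ = 0 := by
    have h := hQ w₁; rw [hw₁] at h; simpa using h
  have haw₂ : a ⬝ᵥ w₂ = 0 := by
    have h := hQ w₂; rw [hw₂] at h; simpa using h
  set α := a ⬝ᵥ w₁ with hα_def
  have hbw₂ : b ⬝ᵥ w₂ = -α := by
    have h := hpol w₁ w₂; rw [hw₁, hw₂] at h
    simp only [Matrix.cons_val_zero, Matrix.cons_val_one, Matrix.head_cons,
      one_mul, zero_mul, ← hα_def] at h
    linear_combination h
  have ha : ∀ k, a k = α * ξ 0 k := by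
    intro k
    have h := hpol (Pi.single k 1) w₂
    rw [hw₂, Matrix.mulVec_single_one] at h
    simp only [Matrix.cons_val_zero, Matrix.cons_val_one, Matrix.head_cons, Matrix.col_apply,
      dotProduct_single, mul_one, zero_mul, one_mul, haw₂, hbw₂, mul_zero] at h
    linear_combination h
  have hb : ∀ k, b k = -(α * ξ 1 k) := by
    intro k
    have h := hpol (Pi.single k 1) w₁
    rw [hw₁, Matrix.mulVec_single_one] at h
    simp only [Matrix.cons_val_zero, Matrix.cons_val_one, Matrix.head_cons, Matrix.col_apply,
      dotProduct_single, mul_one, zero_mul, one_mul, hbw₁, mul_zero, ← hα_def] at h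
    linear_combination h
  have ha' : ∀ k, s 1 * ψ 0 k - s 0 * ψ 2 k = α * ξ 0 k := ha
  have hb' : ∀ k, s 0 * ψ 3 k - s 1 * ψ 1 k = -(α * ξ 1 k) := hb
  by_cases h0 : s 0 = 0
  · have h1 : s 1 ≠ 0 := by
      intro h1; apply hs; funext i; fin_cases i <;> simp [h0, h1]
    refine ⟨Matrix.of ![fun k => ψ 2 k / s 1, fun k => ψ 3 k / s 1], ![α / s 1, 0], ?_⟩
    ext i k
    have hak := ha' k; have hbk := hb' k
    rw [h0] at hak hbk
    fin_cases i
    · show ψ 0 k = _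
      simp only [segre1, Matrix.add_apply, Matrix.of_apply, Matrix.cons_val_zero,
        Matrix.cons_val_one, Matrix.head_cons, Matrix.cons_val_two, Matrix.tail_cons,
        Matrix.cons_val_three, h0, Fin.zero_eta, Fin.mk_one, Fin.reduceFinMk, zero_mul, add_zero]
      field_simp
      linear_combination hak
    · show ψ 1 k = _
      simp only [segre1, Matrix.add_apply, Matrix.of_apply, Matrix.cons_val_zero,
        Matrix.cons_val_one, Matrix.head_cons, Matrix.cons_val_two, Matrix.tail_cons,
        Matrix.cons_val_three, h0, Fin.zero_eta, Fin.mk_one, Fin.reduceFinMk, zero_mul, add_zero]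
      field_simp
      linear_combination -hbk
    · show ψ 2 k = _
      simp only [segre1, Matrix.add_apply, Matrix.of_apply, Matrix.cons_val_zero,
        Matrix.cons_val_one, Matrix.head_cons, Matrix.cons_val_two, Matrix.tail_cons,
        Matrix.cons_val_three, h0, Fin.zero_eta, Fin.mk_one, Fin.reduceFinMk, zero_mul, add_zero]
      field_simp
    · show ψ 3 k = _
      simp only [segre1, Matrix.add_apply, Matrix.of_apply, Matrix.cons_val_zero,
        Matrix.cons_val_one, Matrix.head_cons, Matrix.cons_val_two, Matrix.tail_cons,
        Matrix.cons_val_three, h0, Fin.zero_eta, Fin.mk_one, Fin.reduceFinMk, zero_mul, add_zero]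
      field_simp
  · refine ⟨Matrix.of ![fun k => ψ 0 k / s 0, fun k => ψ 1 k / s 0], ![0, -α / s 0], ?_⟩
    ext i k
    have hak := ha' k; have hbk := hb' k
    fin_cases i
    · show ψ 0 k = _
      simp only [segre1, Matrix.add_apply, Matrix.of_apply, Matrix.cons_val_zero,
        Matrix.cons_val_one, Matrix.head_cons, Matrix.cons_val_two, Matrix.tail_cons,
        Matrix.cons_val_three, Fin.zero_eta, Fin.mk_one, Fin.reduceFinMk, zero_mul, add_zero]
      field_simp
    · show ψ 1 k = _
      simp only [segre1, Matrix.add_apply, Matrix.of_apply, Matrix.cons_val_zero,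
        Matrix.cons_val_one, Matrix.head_cons, Matrix.cons_val_two, Matrix.tail_cons,
        Matrix.cons_val_three, Fin.zero_eta, Fin.mk_one, Fin.reduceFinMk, zero_mul, add_zero]
      field_simp
    · show ψ 2 k = _
      simp only [segre1, Matrix.add_apply, Matrix.of_apply, Matrix.cons_val_zero,
        Matrix.cons_val_one, Matrix.head_cons, Matrix.cons_val_two, Matrix.tail_cons,
        Matrix.cons_val_three, Fin.zero_eta, Fin.mk_one, Fin.reduceFinMk, zero_mul, add_zero]
      field_simp
      linear_combination -hak
    · show ψ 3 k = _
      simp only [segre1, Matrix.add_apply, Matrix.of_apply, Matrix.cons_val_zero,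
        Matrix.cons_val_one, Matrix.head_cons, Matrix.cons_val_two, Matrix.tail_cons,
        Matrix.cons_val_three, Fin.zero_eta, Fin.mk_one, Fin.reduceFinMk, zero_mul, add_zero]
      field_simp
      linear_combination hbk

lemma rev2 (s : Fin 2 → K) (ξ : Matrix (Fin 2) (Fin 4) K) (hs : s ≠ 0)
    (hsurj : Function.Surjective ξ.mulVec) (ψ : Matrix (Fin 4) (Fin 4) K)
    (hψ : ψ ∈ Gfiber (segre2 s ξ)) :
    ∃ (t : Matrix (Fin 2) (Fin 4) K) (s' : Fin 2 → K),
      ψ = segre2 s t + segre2 s' ξ := by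
  obtain ⟨w₁, hw₁⟩ := hsurj ![1, 0]
  obtain ⟨w₂, hw₂⟩ := hsurj ![0, 1]
  set a : Fin 4 → K := fun k => s 1 * ψ 0 k - s 0 * ψ 1 k with ha_def
  set b : Fin 4 → K := fun k => s 0 * ψ 3 k - s 1 * ψ 2 k with hb_def
  have hQ : ∀ w, (ξ.mulVec w 0) * (b ⬝ᵥ w) + (ξ.mulVec w 1) * (a ⬝ᵥ w) = 0 := by
    intro w
    have h := hψ w
    simp only [ha_def, hb_def, segre2, Matrix.mulVec, dotProduct,
      Fin.sum_univ_four, Matrix.of_apply, Matrix.cons_val_zero, Matrix.cons_val_one,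
      Matrix.head_cons, Matrix.cons_val_two, Matrix.tail_cons, Matrix.cons_val_three] at h ⊢
    linear_combination h
  have hpol : ∀ w w', ξ.mulVec w 0 * (b ⬝ᵥ w') + ξ.mulVec w' 0 * (b ⬝ᵥ w)
      + ξ.mulVec w 1 * (a ⬝ᵥ w') + ξ.mulVec w' 1 * (a ⬝ᵥ w) = 0 := by
    intro w w'
    have h1 := hQ (w + w'); have h2 := hQ w; have h3 := hQ w'
    simp only [Matrix.mulVec, dotProduct, Fin.sum_univ_four, Pi.add_apply] at h1 h2 h3 ⊢
    linear_combination h1 - h2 - h3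
  have hbw₁ : b ⬝ᵥ w₁ = 0 := by
    have h := hQ w₁; rw [hw₁] at h; simpa using h
  have haw₂ : a ⬝ᵥ w₂ = 0 := by
    have h := hQ w₂; rw [hw₂] at h; simpa using h
  set α := a ⬝ᵥ w₁ with hα_def
  have hbw₂ : b ⬝ᵥ w₂ = -α := by
    have h := hpol w₁ w₂; rw [hw₁, hw₂] at h
    simp only [Matrix.cons_val_zero, Matrix.cons_val_one, Matrix.head_cons,
      one_mul, zero_mul, ← hα_def] at h
    linear_combination h
  have ha : ∀ k, a k = α * ξ 0 k := by
    intro k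
    have h := hpol (Pi.single k 1) w₂
    rw [hw₂, Matrix.mulVec_single_one] at h
    simp only [Matrix.cons_val_zero, Matrix.cons_val_one, Matrix.head_cons, Matrix.col_apply,
      dotProduct_single, mul_one, zero_mul, one_mul, haw₂, hbw₂, mul_zero] at h
    linear_combination h
  have hb : ∀ k, b k = -(α * ξ 1 k) := by
    intro k
    have h := hpol (Pi.single k 1) w₁
    rw [hw₁, Matrix.mulVec_single_one] at h
    simp only [Matrix.cons_val_zero, Matrix.cons_val_one, Matrix.head_cons, Matrix.col_apply,
      dotProduct_single, mul_one, zero_mul, one_mul, hbw₁, mul_zero, ← hα_def] at h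
    linear_combination h
  have ha' : ∀ k, s 1 * ψ 0 k - s 0 * ψ 1 k = α * ξ 0 k := ha
  have hb' : ∀ k, s 0 * ψ 3 k - s 1 * ψ 2 k = -(α * ξ 1 k) := hb
  by_cases h0 : s 0 = 0
  · have h1 : s 1 ≠ 0 := by
      intro h1; apply hs; funext i; fin_cases i <;> simp [h0, h1]
    refine ⟨Matrix.of ![fun k => ψ 1 k / s 1, fun k => ψ 3 k / s 1], ![α / s 1, 0], ?_⟩
    ext i k
    have hak := ha' k; have hbk := hb' k
    rw [h0] at hak hbk
    fin_cases i
    · show ψ 0 k = _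
      simp only [segre2, Matrix.add_apply, Matrix.of_apply, Matrix.cons_val_zero,
        Matrix.cons_val_one, Matrix.head_cons, Matrix.cons_val_two, Matrix.tail_cons,
        Matrix.cons_val_three, h0, Fin.zero_eta, Fin.mk_one, Fin.reduceFinMk, zero_mul, add_zero]
      field_simp
      linear_combination hak
    · show ψ 1 k = _
      simp only [segre2, Matrix.add_apply, Matrix.of_apply, Matrix.cons_val_zero,
        Matrix.cons_val_one, Matrix.head_cons, Matrix.cons_val_two, Matrix.tail_cons,
        Matrix.cons_val_three, h0, Fin.zero_eta, Fin.mk_one, Fin.reduceFinMk, zero_mul, add_zero]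
      field_simp
    · show ψ 2 k = _
      simp only [segre2, Matrix.add_apply, Matrix.of_apply, Matrix.cons_val_zero,
        Matrix.cons_val_one, Matrix.head_cons, Matrix.cons_val_two, Matrix.tail_cons,
        Matrix.cons_val_three, h0, Fin.zero_eta, Fin.mk_one, Fin.reduceFinMk, zero_mul, add_zero]
      field_simp
      linear_combination -hbk
    · show ψ 3 k = _
      simp only [segre2, Matrix.add_apply, Matrix.of_apply, Matrix.cons_val_zero,
        Matrix.cons_val_one, Matrix.head_cons, Matrix.cons_val_two, Matrix.tail_cons,
        Matrix.cons_val_three, h0, Fin.zero_eta, Fin.mk_one, Fin.reduceFinMk, zero_mul, add_zero]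
      field_simp
  · refine ⟨Matrix.of ![fun k => ψ 0 k / s 0, fun k => ψ 2 k / s 0], ![0, -α / s 0], ?_⟩
    ext i k
    have hak := ha' k; have hbk := hb' k
    fin_cases i
    · show ψ 0 k = _
      simp only [segre2, Matrix.add_apply, Matrix.of_apply, Matrix.cons_val_zero,
        Matrix.cons_val_one, Matrix.head_cons, Matrix.cons_val_two, Matrix.tail_cons,
        Matrix.cons_val_three, Fin.zero_eta, Fin.mk_one, Fin.reduceFinMk, zero_mul, add_zero]
      field_simp
    · show ψ 1 k = _
      simp only [segre2, Matrix.add_apply, Matrix.of_apply, Matrix.cons_val_zero,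
        Matrix.cons_val_one, Matrix.head_cons, Matrix.cons_val_two, Matrix.tail_cons,
        Matrix.cons_val_three, Fin.zero_eta, Fin.mk_one, Fin.reduceFinMk, zero_mul, add_zero]
      field_simp
      linear_combination -hak
    · show ψ 2 k = _
      simp only [segre2, Matrix.add_apply, Matrix.of_apply, Matrix.cons_val_zero,
        Matrix.cons_val_one, Matrix.head_cons, Matrix.cons_val_two, Matrix.tail_cons,
        Matrix.cons_val_three, Fin.zero_eta, Fin.mk_one, Fin.reduceFinMk, zero_mul, add_zero]
      field_simp
    · show ψ 3 k = _
      simp only [segre2, Matrix.add_apply, Matrix.of_apply, Matrix.cons_val_zero,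
        Matrix.cons_val_one, Matrix.head_cons, Matrix.cons_val_two, Matrix.tail_cons,
        Matrix.cons_val_three, Fin.zero_eta, Fin.mk_one, Fin.reduceFinMk, zero_mul, add_zero]
      field_simp
      linear_combination hbk

/-- The tangent map to `Z₁` at `σ₁(s,ξ)`. -/
def L1 (s : Fin 2 → K) (ξ : Matrix (Fin 2) (Fin 4) K) :
    (Matrix (Fin 2) (Fin 4) K × (Fin 2 → K)) →ₗ[K] Matrix (Fin 4) (Fin 4) K where
  toFun p := segre1 s p.1 + segre1 p.2 ξ
  map_add' p q := by
    ext i k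
    simp only [segre1, Prod.fst_add, Prod.snd_add, Matrix.add_apply, Matrix.of_apply, Pi.add_apply]
    ring
  map_smul' c p := by
    ext i k
    simp only [segre1, Prod.smul_fst, Prod.smul_snd, Matrix.add_apply, Matrix.smul_apply,
      Matrix.of_apply, Pi.smul_apply, smul_eq_mul, RingHom.id_apply]
    ring

/-- The tangent map to `Z₂` at `σ₂(s,ξ)`. -/
def L2 (s : Fin 2 → K) (ξ : Matrix (Fin 2) (Fin 4) K) :
    (Matrix (Fin 2) (Fin 4) K × (Fin 2 → K)) →ₗ[K] Matrix (Fin 4) (Fin 4) K where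
  toFun p := segre2 s p.1 + segre2 p.2 ξ
  map_add' p q := by
    ext i k
    simp only [segre2, Prod.fst_add, Prod.snd_add, Matrix.add_apply, Matrix.of_apply, Pi.add_apply]
    ring
  map_smul' c p := by
    ext i k
    simp only [segre2, Prod.smul_fst, Prod.smul_snd, Matrix.add_apply, Matrix.smul_apply,
      Matrix.of_apply, Pi.smul_apply, smul_eq_mul, RingHom.id_apply]
    ring

lemma ker_L1 (s : Fin 2 → K) (ξ : Matrix (Fin 2) (Fin 4) K) (hs : s ≠ 0)
    (hsurj : Function.Surjective ξ.mulVec) :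
    LinearMap.ker (L1 s ξ)
      = Submodule.span K {((-ξ, s) : Matrix (Fin 2) (Fin 4) K × (Fin 2 → K))} := by
  obtain ⟨w₁, hw₁⟩ := hsurj ![1, 0]
  apply le_antisymm
  · rintro ⟨t, s'⟩ hmem
    rw [LinearMap.mem_ker] at hmem
    have hE : ∀ i k, segre1 s t i k + segre1 s' ξ i k = 0 := by
      intro i k
      have h : (segre1 s t + segre1 s' ξ) i k = (0 : Matrix (Fin 4) (Fin 4) K) i k := by
        have : segre1 s t + segre1 s' ξ = 0 := hmem
        rw [this]
      simpa [Matrix.add_apply] using h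
    have E0 : ∀ k, s 0 * t 0 k + s' 0 * ξ 0 k = 0 := fun k => by
      have h := hE 0 k
      simp only [segre1, Matrix.of_apply, Matrix.cons_val_zero, Matrix.cons_val_one,
        Matrix.head_cons, Matrix.cons_val_two, Matrix.tail_cons, Matrix.cons_val_three] at h
      linear_combination h
    have E1 : ∀ k, s 0 * t 1 k + s' 0 * ξ 1 k = 0 := fun k => by
      have h := hE 1 k
      simp only [segre1, Matrix.of_apply, Matrix.cons_val_zero, Matrix.cons_val_one,
        Matrix.head_cons, Matrix.cons_val_two, Matrix.tail_cons, Matrix.cons_val_three] at h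
      linear_combination h
    have E2 : ∀ k, s 1 * t 0 k + s' 1 * ξ 0 k = 0 := fun k => by
      have h := hE 2 k
      simp only [segre1, Matrix.of_apply, Matrix.cons_val_zero, Matrix.cons_val_one,
        Matrix.head_cons, Matrix.cons_val_two, Matrix.tail_cons, Matrix.cons_val_three] at h
      linear_combination h
    have E3 : ∀ k, s 1 * t 1 k + s' 1 * ξ 1 k = 0 := fun k => by
      have h := hE 3 k
      simp only [segre1, Matrix.of_apply, Matrix.cons_val_zero, Matrix.cons_val_one,
        Matrix.head_cons, Matrix.cons_val_two, Matrix.tail_cons, Matrix.cons_val_three] at h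
      linear_combination h
    have key : s 0 * s' 1 - s 1 * s' 0 = 0 := by
      have h4 : ∀ k, (s 0 * s' 1 - s 1 * s' 0) * ξ 0 k = 0 := fun k => by
        linear_combination s 0 * E2 k - s 1 * E0 k
      have h5 : (s 0 * s' 1 - s 1 * s' 0) * (ξ.mulVec w₁ 0) = 0 := by
        simp only [Matrix.mulVec, dotProduct, Fin.sum_univ_four]
        linear_combination w₁ 0 * h4 0 + w₁ 1 * h4 1 + w₁ 2 * h4 2 + w₁ 3 * h4 3
      rw [hw₁] at h5
      simpa using h5
    rw [Submodule.mem_span_singleton]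
    by_cases h0 : s 0 = 0
    · have h1 : s 1 ≠ 0 := by intro h1; apply hs; funext i; fin_cases i <;> simp [h0, h1]
      have hs0' : s' 0 = 0 := by
        have h : s 1 * s' 0 = 0 := by linear_combination -key + s' 1 * h0
        exact (mul_eq_zero.1 h).resolve_left h1
      refine ⟨s' 1 / s 1, ?_⟩
      rw [Prod.smul_mk, Prod.mk.injEq]
      constructor
      · ext i k
        fin_cases i
        · show _ = t 0 k
          simp only [Matrix.smul_apply, Matrix.neg_apply, smul_eq_mul, Fin.zero_eta, Fin.mk_one]
          have h := E2 k
          field_simp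
          linear_combination -h
        · show _ = t 1 k
          simp only [Matrix.smul_apply, Matrix.neg_apply, smul_eq_mul, Fin.zero_eta, Fin.mk_one]
          have h := E3 k
          field_simp
          linear_combination -h
      · funext i
        fin_cases i
        · show s' 1 / s 1 * s 0 = s' 0
          rw [h0, hs0']; ring
        · show s' 1 / s 1 * s 1 = s' 1
          field_simp
    · refine ⟨s' 0 / s 0, ?_⟩
      rw [Prod.smul_mk, Prod.mk.injEq]
      constructor
      · ext i k
        fin_cases i
        · show _ = t 0 k
          simp only [Matrix.smul_apply, Matrix.neg_apply, smul_eq_mul, Fin.zero_eta, Fin.mk_one]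
          have h := E0 k
          field_simp
          linear_combination -h
        · show _ = t 1 k
          simp only [Matrix.smul_apply, Matrix.neg_apply, smul_eq_mul, Fin.zero_eta, Fin.mk_one]
          have h := E1 k
          field_simp
          linear_combination -h
      · funext i
        fin_cases i
        · show s' 0 / s 0 * s 0 = s' 0
          field_simp
        · show s' 0 / s 0 * s 1 = s' 1
          field_simp
          linear_combination -key
  · rw [Submodule.span_le, Set.singleton_subset_iff, SetLike.mem_coe, LinearMap.mem_ker]
    show segre1 s (-ξ) + segre1 s ξ = 0
    ext i k
    fin_cases i <;>
      simp [segre1, Matrix.add_apply, Matrix.neg_apply]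

lemma ker_L2 (s : Fin 2 → K) (ξ : Matrix (Fin 2) (Fin 4) K) (hs : s ≠ 0)
    (hsurj : Function.Surjective ξ.mulVec) :
    LinearMap.ker (L2 s ξ)
      = Submodule.span K {((-ξ, s) : Matrix (Fin 2) (Fin 4) K × (Fin 2 → K))} := by
  obtain ⟨w₁, hw₁⟩ := hsurj ![1, 0]
  apply le_antisymm
  · rintro ⟨t, s'⟩ hmem
    rw [LinearMap.mem_ker] at hmem
    have hE : ∀ i k, segre2 s t i k + segre2 s' ξ i k = 0 := by
      intro i k
      have h : (segre2 s t + segre2 s' ξ) i k = (0 : Matrix (Fin 4) (Fin 4) K) i k := by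
        have : segre2 s t + segre2 s' ξ = 0 := hmem
        rw [this]
      simpa [Matrix.add_apply] using h
    have E0 : ∀ k, s 0 * t 0 k + s' 0 * ξ 0 k = 0 := fun k => by
      have h := hE 0 k
      simp only [segre2, Matrix.of_apply, Matrix.cons_val_zero, Matrix.cons_val_one,
        Matrix.head_cons, Matrix.cons_val_two, Matrix.tail_cons, Matrix.cons_val_three] at h
      linear_combination h
    have E1 : ∀ k, s 1 * t 0 k + s' 1 * ξ 0 k = 0 := fun k => by
      have h := hE 1 k
      simp only [segre2, Matrix.of_apply, Matrix.cons_val_zero, Matrix.cons_val_one,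
        Matrix.head_cons, Matrix.cons_val_two, Matrix.tail_cons, Matrix.cons_val_three] at h
      linear_combination h
    have E2 : ∀ k, s 0 * t 1 k + s' 0 * ξ 1 k = 0 := fun k => by
      have h := hE 2 k
      simp only [segre2, Matrix.of_apply, Matrix.cons_val_zero, Matrix.cons_val_one,
        Matrix.head_cons, Matrix.cons_val_two, Matrix.tail_cons, Matrix.cons_val_three] at h
      linear_combination h
    have E3 : ∀ k, s 1 * t 1 k + s' 1 * ξ 1 k = 0 := fun k => by
      have h := hE 3 k
      simp only [segre2, Matrix.of_apply, Matrix.cons_val_zero, Matrix.cons_val_one,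
        Matrix.head_cons, Matrix.cons_val_two, Matrix.tail_cons, Matrix.cons_val_three] at h
      linear_combination h
    have key : s 0 * s' 1 - s 1 * s' 0 = 0 := by
      have h4 : ∀ k, (s 0 * s' 1 - s 1 * s' 0) * ξ 0 k = 0 := fun k => by
        linear_combination s 0 * E1 k - s 1 * E0 k
      have h5 : (s 0 * s' 1 - s 1 * s' 0) * (ξ.mulVec w₁ 0) = 0 := by
        simp only [Matrix.mulVec, dotProduct, Fin.sum_univ_four]
        linear_combination w₁ 0 * h4 0 + w₁ 1 * h4 1 + w₁ 2 * h4 2 + w₁ 3 * h4 3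
      rw [hw₁] at h5
      simpa using h5
    rw [Submodule.mem_span_singleton]
    by_cases h0 : s 0 = 0
    · have h1 : s 1 ≠ 0 := by intro h1; apply hs; funext i; fin_cases i <;> simp [h0, h1]
      have hs0' : s' 0 = 0 := by
        have h : s 1 * s' 0 = 0 := by linear_combination -key + s' 1 * h0
        exact (mul_eq_zero.1 h).resolve_left h1
      refine ⟨s' 1 / s 1, ?_⟩
      rw [Prod.smul_mk, Prod.mk.injEq]
      constructor
      · ext i k
        fin_cases i
        · show _ = t 0 k
          simp only [Matrix.smul_apply, Matrix.neg_apply, smul_eq_mul, Fin.zero_eta, Fin.mk_one]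
          have h := E1 k
          field_simp
          linear_combination -h
        · show _ = t 1 k
          simp only [Matrix.smul_apply, Matrix.neg_apply, smul_eq_mul, Fin.zero_eta, Fin.mk_one]
          have h := E3 k
          field_simp
          linear_combination -h
      · funext i
        fin_cases i
        · show s' 1 / s 1 * s 0 = s' 0
          rw [h0, hs0']; ring
        · show s' 1 / s 1 * s 1 = s' 1
          field_simp
    · refine ⟨s' 0 / s 0, ?_⟩
      rw [Prod.smul_mk, Prod.mk.injEq]
      constructor
      · ext i k
        fin_cases i
        · show _ = t 0 k
          simp only [Matrix.smul_apply, Matrix.neg_apply, smul_eq_mul, Fin.zero_eta, Fin.mk_one]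
          have h := E0 k
          field_simp
          linear_combination -h
        · show _ = t 1 k
          simp only [Matrix.smul_apply, Matrix.neg_apply, smul_eq_mul, Fin.zero_eta, Fin.mk_one]
          have h := E2 k
          field_simp
          linear_combination -h
      · funext i
        fin_cases i
        · show s' 0 / s 0 * s 0 = s' 0
          field_simp
        · show s' 0 / s 0 * s 1 = s' 1
          field_simp
          linear_combination -key
  · rw [Submodule.span_le, Set.singleton_subset_iff, SetLike.mem_coe, LinearMap.mem_ker]
    show segre2 s (-ξ) + segre2 s ξ = 0
    ext i k
    fin_cases i <;>
      simp [segre2, Matrix.add_apply, Matrix.neg_apply]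

lemma finrank_range_L1 (s : Fin 2 → K) (ξ : Matrix (Fin 2) (Fin 4) K) (hs : s ≠ 0)
    (hsurj : Function.Surjective ξ.mulVec) :
    Module.finrank K ↥(LinearMap.range (L1 s ξ)) = 9 := by
  have h10 : Module.finrank K (Matrix (Fin 2) (Fin 4) K × (Fin 2 → K)) = 10 := by
    rw [Module.finrank_prod, Module.finrank_matrix, Module.finrank_fin_fun]
    simp
  have hker1 : Module.finrank K ↥(LinearMap.ker (L1 s ξ)) = 1 := by
    rw [ker_L1 s ξ hs hsurj]
    refine finrank_span_singleton ?_
    intro hv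
    exact hs (by simpa using congrArg Prod.snd hv)
  have hrn := (L1 s ξ).finrank_range_add_finrank_ker
  rw [h10, hker1] at hrn
  omega

lemma finrank_range_L2 (s : Fin 2 → K) (ξ : Matrix (Fin 2) (Fin 4) K) (hs : s ≠ 0)
    (hsurj : Function.Surjective ξ.mulVec) :
    Module.finrank K ↥(LinearMap.range (L2 s ξ)) = 9 := by
  have h10 : Module.finrank K (Matrix (Fin 2) (Fin 4) K × (Fin 2 → K)) = 10 := by
    rw [Module.finrank_prod, Module.finrank_matrix, Module.finrank_fin_fun]
    simp
  have hker1 : Module.finrank K ↥(LinearMap.ker (L2 s ξ)) = 1 := by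
    rw [ker_L2 s ξ hs hsurj]
    refine finrank_span_singleton ?_
    intro hv
    exact hs (by simpa using congrArg Prod.snd hv)
  have hrn := (L2 s ξ).finrank_range_add_finrank_ker
  rw [h10, hker1] at hrn
  omega

/-- Away from `Z₁ ∩ Z₂`, i.e. at `φ = σ₁(s,ξ)` with `ξ` of rank 2, the
intersection `𝒢_φ` of the tangent spaces to all point conditions equals the
tangent space to `Z₁` at `φ`, of dimension 9; analogously for `σ₂` and `Z₂`.
Hence the base scheme is reduced away from `Z₁ ∩ Z₂`. -/
theorem base_scheme_reduced_away [IsAlgClosed K] [CharZero K]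
    (s : Fin 2 → K) (ξ : Matrix (Fin 2) (Fin 4) K)
    (hs : s ≠ 0) (hξ : ξ.rank = 2) :
    (Gfiber (segre1 s ξ)
        = {χ : Matrix (Fin 4) (Fin 4) K |
            ∃ (t : Matrix (Fin 2) (Fin 4) K) (s' : Fin 2 → K),
              χ = segre1 s t + segre1 s' ξ} ∧
      Module.finrank K ↥(Submodule.span K (Gfiber (segre1 s ξ))) = 9) ∧
    (Gfiber (segre2 s ξ)
        = {χ : Matrix (Fin 4) (Fin 4) K |
            ∃ (t : Matrix (Fin 2) (Fin 4) K) (s' : Fin 2 → K),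
              χ = segre2 s t + segre2 s' ξ} ∧
      Module.finrank K ↥(Submodule.span K (Gfiber (segre2 s ξ))) = 9) := by
  have hsurj := surj_of_rank2 ξ hξ
  have hset1 : Gfiber (segre1 s ξ)
      = {χ : Matrix (Fin 4) (Fin 4) K |
          ∃ (t : Matrix (Fin 2) (Fin 4) K) (s' : Fin 2 → K),
            χ = segre1 s t + segre1 s' ξ} := by
    ext ψ
    constructor
    · exact rev1 s ξ hs hsurj ψ
    · rintro ⟨t, s', rfl⟩
      exact fwd1 s s' ξ t
  have hset2 : Gfiber (segre2 s ξ)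
      = {χ : Matrix (Fin 4) (Fin 4) K |
          ∃ (t : Matrix (Fin 2) (Fin 4) K) (s' : Fin 2 → K),
            χ = segre2 s t + segre2 s' ξ} := by
    ext ψ
    constructor
    · exact rev2 s ξ hs hsurj ψ
    · rintro ⟨t, s', rfl⟩
      exact fwd2 s s' ξ t
  have hrange1 : {χ : Matrix (Fin 4) (Fin 4) K |
      ∃ (t : Matrix (Fin 2) (Fin 4) K) (s' : Fin 2 → K),
        χ = segre1 s t + segre1 s' ξ} = ↑(LinearMap.range (L1 s ξ)) := by
    ext χ
    simp only [Set.mem_setOf_eq, SetLike.mem_coe, LinearMap.mem_range, Prod.exists]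
    constructor
    · rintro ⟨t, s', rfl⟩; exact ⟨t, s', rfl⟩
    · rintro ⟨t, s', rfl⟩; exact ⟨t, s', rfl⟩
  have hrange2 : {χ : Matrix (Fin 4) (Fin 4) K |
      ∃ (t : Matrix (Fin 2) (Fin 4) K) (s' : Fin 2 → K),
        χ = segre2 s t + segre2 s' ξ} = ↑(LinearMap.range (L2 s ξ)) := by
    ext χ
    simp only [Set.mem_setOf_eq, SetLike.mem_coe, LinearMap.mem_range, Prod.exists]
    constructor
    · rintro ⟨t, s', rfl⟩; exact ⟨t, s', rfl⟩
    · rintro ⟨t, s', rfl⟩; exact ⟨t, s', rfl⟩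
  refine ⟨⟨hset1, ?_⟩, hset2, ?_⟩
  · rw [hset1, hrange1, Submodule.span_eq]
    exact finrank_range_L1 s ξ hs hsurj
  · rw [hset2, hrange2, Submodule.span_eq]
    exact finrank_range_L2 s ξ hs hsurj
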